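/- Let m_X, m_Y, Ω_X, Ω_Y, α, γ̄, C > 0 be real numbers and let f be the α-Beaulieu-Xie shadowed SNR probability density with normalizing constant C. Then for every real k ≥ 0 the function γ ↦ γ^k f(γ) is integrable on (0, ∞); in particular, all raw moments of the instantaneous SNR of the α-Beaulieu-Xie shadowed model are finite. -/

import Mathlib

open Real MeasureTheory Set

/-- Pochhammer symbol `(q)_n = q (q+1) ⋯ (q+n-1)`, with `(q)_0 = 1`. -/
noncomputable def poch (q : ℝ) (n : ℕ) : ℝ := ∏ i ∈ Finset.range n, (q + i)

/-- Confluent (Kummer) hypergeometric function `₁F₁(a; b; z)`. -/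
noncomputable def oneF1 (a b z : ℝ) : ℝ :=
  ∑' n : ℕ, (poch a n / poch b n) * z ^ n / (n.factorial : ℝ)

/-- Gauss hypergeometric function `₂F₁(a, b; c; z)`. -/
noncomputable def twoF1 (a b c z : ℝ) : ℝ :=
  ∑' n : ℕ, (poch a n * poch b n / poch c n) * z ^ n / (n.factorial : ℝ)

/-- Confluent Appell (Humbert) function `Φ₂(b₁, b₂; c; x, y)`. -/
noncomputable def Phi2 (b₁ b₂ c x y : ℝ) : ℝ :=
  ∑' p : ℕ × ℕ, (poch b₁ p.1 * poch b₂ p.2 / poch c (p.1 + p.2)) *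
    x ^ p.1 * y ^ p.2 / ((p.1.factorial : ℝ) * (p.2.factorial : ℝ))

/-- The α-Beaulieu-Xie shadowed SNR probability density with parameters
`mX, mY, ΩX, ΩY, α`, average SNR `γbar` and normalizing constant `C`, where
`θ = mY ΩX / (mY ΩX + mX ΩY)` and `δ = mX ΩY / (mY ΩX + mX ΩY)`. -/
noncomputable def aBXpdf (mX mY ΩX ΩY α γbar C γ : ℝ) : ℝ :=
  (α * (mY * ΩX / (mY * ΩX + mX * ΩY)) ^ mY / (2 * C ^ mX * Real.Gamma mX * γbar)) *
    (γ / γbar) ^ (α * mX / 2 - 1) * Real.exp (-(1 / C) * (γ / γbar) ^ (α / 2)) *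
    oneF1 mY mX ((mX * ΩY / (mY * ΩX + mX * ΩY)) / C * (γ / γbar) ^ (α / 2))

lemma poch_pos {q : ℝ} (hq : 0 < q) (n : ℕ) : 0 < poch q n :=
  Finset.prod_pos fun i _ => by positivity

lemma poch_bound {a b r : ℝ} (ha : 0 < a) (hb : 0 < b) (hr : 1 < r) :
    ∃ M : ℝ, 0 < M ∧ ∀ n : ℕ, poch a n ≤ M * (poch b n * r ^ n) := by
  set N : ℕ := ⌈a / (r - 1)⌉₊ with hN
  have key : ∀ n : ℕ, N ≤ n → a + n ≤ r * (b + n) := by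
    intro n hn
    have h1 : a / (r - 1) ≤ (n : ℝ) := le_trans (Nat.le_ceil _) (Nat.cast_le.2 hn)
    have h2 : a ≤ (r - 1) * n := by
      rw [div_le_iff₀ (by linarith)] at h1; linarith
    nlinarith [hb, Nat.cast_nonneg (α := ℝ) n]
  set M : ℝ := (Finset.range (N + 1)).sup' ⟨0, by simp⟩
      (fun m => poch a m / (poch b m * r ^ m)) with hM
  have hmem : ∀ m : ℕ, m ≤ N → poch a m / (poch b m * r ^ m) ≤ M :=
    fun m hm => Finset.le_sup' (fun m => poch a m / (poch b m * r ^ m)) (Finset.mem_range.2 (Nat.lt_succ_of_le hm))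
  have hr0 : (0:ℝ) < r := by linarith
  have hMpos : 0 < M := by
    have h0 : poch a 0 / (poch b 0 * r ^ 0) = 1 := by simp [poch]
    have := hmem 0 (Nat.zero_le _)
    rw [h0] at this; linarith
  refine ⟨M, hMpos, ?_⟩
  intro n
  induction n with
  | zero =>
    have := hmem 0 (Nat.zero_le _)
    have hpos : (0:ℝ) < poch b 0 * r ^ 0 := by
      have := poch_pos hb 0; positivity
    exact (div_le_iff₀ hpos).1 (hmem 0 (Nat.zero_le _))
  | succ n ih =>
    by_cases hle : n + 1 ≤ N
    · have hpos : (0:ℝ) < poch b (n+1) * r ^ (n+1) := by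
        have := poch_pos hb (n+1); positivity
      exact (div_le_iff₀ hpos).1 (hmem (n+1) hle)
    · have hNn : N ≤ n := by omega
      have hstep := key n hNn
      have e1 : poch a (n+1) = poch a n * (a + n) := by
        simp [poch, Finset.prod_range_succ]
      have e2 : poch b (n+1) = poch b n * (b + n) := by
        simp [poch, Finset.prod_range_succ]
      have hbn : (0:ℝ) < poch b n := poch_pos hb n
      have han : (0:ℝ) ≤ a + n := by positivity
      calc poch a (n+1) = poch a n * (a + n) := e1
        _ ≤ M * (poch b n * r ^ n) * (a + n) := by
            apply mul_le_mul_of_nonneg_right ih han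
        _ ≤ M * (poch b n * r ^ n) * (r * (b + n)) := by
            apply mul_le_mul_of_nonneg_left hstep
            positivity
        _ = M * (poch b (n+1) * r ^ (n+1)) := by rw [e2]; ring

lemma summable_oneF1 {a b : ℝ} (ha : 0 < a) (hb : 0 < b) (z : ℝ) :
    Summable (fun n : ℕ => poch a n / poch b n * z ^ n / (n.factorial : ℝ)) := by
  obtain ⟨M, hM, hMle⟩ := poch_bound ha hb one_lt_two
  refine Summable.of_norm_bounded
    ((Real.summable_pow_div_factorial (2 * |z|)).mul_left M) (fun n => ?_)
  have hbn := poch_pos hb n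
  have han := poch_pos ha n
  have h1 : poch a n / poch b n ≤ M * 2 ^ n := by
    rw [div_le_iff₀ hbn]
    calc poch a n ≤ M * (poch b n * 2 ^ n) := hMle n
      _ = M * 2 ^ n * poch b n := by ring
  have h2 : |poch a n / poch b n * z ^ n / (n.factorial : ℝ)|
      = poch a n / poch b n * |z| ^ n / (n.factorial : ℝ) := by
    rw [abs_div, abs_mul, abs_pow, abs_of_pos (div_pos han hbn),
      abs_of_nonneg (by positivity : (0:ℝ) ≤ (n.factorial : ℝ))]
  rw [Real.norm_eq_abs, h2]
  have hzn : (0:ℝ) ≤ |z| ^ n := by positivity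
  calc poch a n / poch b n * |z| ^ n / (n.factorial : ℝ)
      ≤ M * 2 ^ n * |z| ^ n / (n.factorial : ℝ) := by
        apply div_le_div_of_nonneg_right ?_ ?_ |>.trans_eq rfl
        · exact mul_le_mul_of_nonneg_right h1 hzn
        · positivity
    _ = M * ((2 * |z|) ^ n / (n.factorial : ℝ)) := by rw [mul_pow]; ring

lemma oneF1_nonneg {a b : ℝ} (ha : 0 < a) (hb : 0 < b) {z : ℝ} (hz : 0 ≤ z) :
    0 ≤ oneF1 a b z := by
  apply tsum_nonneg
  intro n
  have := (poch_pos ha n).le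
  have := (poch_pos hb n).le
  positivity

lemma oneF1_le {a b r : ℝ} (ha : 0 < a) (hb : 0 < b) (hr : 1 < r) :
    ∃ M : ℝ, 0 < M ∧ ∀ z : ℝ, 0 ≤ z → oneF1 a b z ≤ M * Real.exp (r * z) := by
  obtain ⟨M, hM, hMle⟩ := poch_bound ha hb hr
  refine ⟨M, hM, fun z hz => ?_⟩
  have hr0 : (0:ℝ) < r := by linarith
  have hsum2 : Summable (fun n : ℕ => M * ((r*z) ^ n / (n.factorial : ℝ))) :=
    (Real.summable_pow_div_factorial (r*z)).mul_left M
  have hterm : ∀ n : ℕ, poch a n / poch b n * z ^ n / (n.factorial : ℝ)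
      ≤ M * ((r*z) ^ n / (n.factorial : ℝ)) := by
    intro n
    have hbn := poch_pos hb n
    have h1 : poch a n / poch b n ≤ M * r ^ n := by
      rw [div_le_iff₀ hbn]
      calc poch a n ≤ M * (poch b n * r ^ n) := hMle n
        _ = M * r ^ n * poch b n := by ring
    have hzn : (0:ℝ) ≤ z ^ n := by positivity
    calc poch a n / poch b n * z ^ n / (n.factorial : ℝ)
        ≤ M * r ^ n * z ^ n / (n.factorial : ℝ) := by
          apply div_le_div_of_nonneg_right (mul_le_mul_of_nonneg_right h1 hzn)
          positivity
      _ = M * ((r*z) ^ n / (n.factorial : ℝ)) := by rw [mul_pow]; ring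
  have hts := Summable.tsum_le_tsum hterm (summable_oneF1 ha hb z) hsum2
  rw [oneF1]
  refine hts.trans_eq ?_
  rw [tsum_mul_left]
  congr 1
  rw [Real.exp_eq_exp_ℝ, NormedSpace.exp_eq_tsum_div]

lemma measurable_oneF1_comp {a b : ℝ} (ha : 0 < a) (hb : 0 < b) {g : ℝ → ℝ}
    (hg : Measurable g) : Measurable (fun x => oneF1 a b (g x)) := by
  have htend : ∀ x : ℝ, Filter.Tendsto
      (fun N => ∑ n ∈ Finset.range N, poch a n / poch b n * (g x) ^ n / (n.factorial : ℝ))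
      Filter.atTop (nhds (oneF1 a b (g x))) :=
    fun x => (summable_oneF1 ha hb (g x)).hasSum.tendsto_sum_nat
  refine measurable_of_tendsto_metrizable (fun N => ?_) (by
    exact tendsto_pi_nhds.2 htend)
  exact Finset.measurable_sum _ (fun n _ => ((hg.pow_const n).const_mul _).div_const _)

lemma integ_aux {p s b : ℝ} (hs : -1 < s) (hp : 0 < p) (hb : 0 < b) :
    IntegrableOn (fun x : ℝ => x ^ s * Real.exp (-b * x ^ p)) (Ioi 0) := by
  have hq : (-1 : ℝ) < (s + 1 - p) / p := by
    rw [lt_div_iff₀ hp]; linarith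
  have h := integrableOn_rpow_mul_exp_neg_mul_rpow hq (one_pos : (0:ℝ) < 1) hb
  rw [← integrableOn_Ioi_comp_rpow_iff'
    (fun y => y ^ ((s+1-p)/p) * Real.exp (-b * y ^ (1:ℝ))) hp.ne'] at h
  refine h.congr_fun (fun x hx => ?_) measurableSet_Ioi
  have hx' : (0:ℝ) < x := hx
  beta_reduce
  rw [smul_eq_mul, Real.rpow_one]
  have h2 : (x ^ p) ^ ((s+1-p)/p) = x ^ (s + 1 - p) := by
    rw [← Real.rpow_mul hx'.le]; congr 1; field_simp
  rw [h2, ← mul_assoc, ← Real.rpow_add hx']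
  congr 2
  ring

/-- All raw moments of the instantaneous SNR of the α-Beaulieu-Xie shadowed
model are finite: `γ ↦ γ^k f(γ)` is integrable on `(0, ∞)` for every `k ≥ 0`. -/
theorem statement_12 (mX mY ΩX ΩY α γbar C : ℝ) (hmX : 0 < mX) (hmY : 0 < mY)
    (hΩX : 0 < ΩX) (hΩY : 0 < ΩY) (hα : 0 < α) (hγbar : 0 < γbar) (hC : 0 < C)
    (k : ℝ) (hk : 0 ≤ k) :
    IntegrableOn (fun γ : ℝ => γ ^ k * aBXpdf mX mY ΩX ΩY α γbar C γ)
      (Set.Ioi 0) := by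
  have hden : 0 < mY * ΩX + mX * ΩY := by positivity
  set θ : ℝ := mY * ΩX / (mY * ΩX + mX * ΩY) with hθdef
  set δ : ℝ := mX * ΩY / (mY * ΩX + mX * ΩY) with hδdef
  have hθ : 0 < θ := by rw [hθdef]; positivity
  have hδ : 0 < δ := by rw [hδdef]; positivity
  have hδ1 : δ < 1 := by
    rw [hδdef, div_lt_one hden]; nlinarith [mul_pos hmY hΩX]
  set r : ℝ := (1 + 1/δ)/2 with hrdef
  have hr1 : 1 < r := by
    have h1 : 1 < 1/δ := by rw [lt_div_iff₀ hδ]; linarith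
    rw [hrdef]; linarith
  have hrδ : r * δ < 1 := by
    have : r * δ = (δ + 1)/2 := by rw [hrdef]; field_simp
    rw [this]; linarith
  obtain ⟨M, hM, hbnd⟩ := oneF1_le hmY hmX hr1
  have hΓ : 0 < Real.Gamma mX := Real.Gamma_pos_of_pos hmX
  have hCX : 0 < C ^ mX := Real.rpow_pos_of_pos hC _
  have hθY : 0 < θ ^ mY := Real.rpow_pos_of_pos hθ _
  set A : ℝ := α * θ ^ mY / (2 * C ^ mX * Real.Gamma mX * γbar) with hAdef
  have hA : 0 < A := by
    rw [hAdef]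
    exact div_pos (mul_pos hα hθY)
      (mul_pos (mul_pos (mul_pos two_pos hCX) hΓ) hγbar)
  set e1 : ℝ := α * mX / 2 - 1 with he1def
  set c' : ℝ := (1 - r * δ)/C with hc'def
  have hc' : 0 < c' := div_pos (by linarith) hC
  set K : ℝ := A * M * γbar ^ k with hKdef
  have hdom : IntegrableOn
      (fun γ : ℝ => K * ((γbar⁻¹ * γ) ^ (k + e1) *
        Real.exp (-c' * (γbar⁻¹ * γ) ^ (α/2)))) (Ioi 0) := by
    have hαmX : 0 < α * mX / 2 := by positivity
    have h0 : IntegrableOn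
        (fun u : ℝ => u ^ (k + e1) * Real.exp (-c' * u ^ (α/2))) (Ioi 0) :=
      integ_aux (by rw [he1def]; linarith) (by linarith) hc'
    have h1 := (integrableOn_Ioi_comp_mul_left_iff
      (fun u : ℝ => u ^ (k + e1) * Real.exp (-c' * u ^ (α/2))) 0
      (inv_pos.2 hγbar)).2 (by simpa using h0)
    exact h1.const_mul K
  apply Integrable.mono' hdom
  · -- measurability
    have hcontOn : ContinuousOn
        (fun γ : ℝ => γ ^ k * (A * (γ/γbar) ^ e1 *
          Real.exp (-(1/C) * (γ/γbar) ^ (α/2)))) (Ioi 0) := by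
      apply ContinuousOn.mul
      · exact continuousOn_id.rpow_const (fun x hx => Or.inl (ne_of_gt hx))
      · apply ContinuousOn.mul
        · apply ContinuousOn.mul continuousOn_const
          exact (continuousOn_id.div_const γbar).rpow_const
            (fun x hx => Or.inl (ne_of_gt (div_pos hx hγbar)))
        · apply Continuous.continuousOn
          exact Real.continuous_exp.comp
            (continuous_const.mul ((continuous_id.div_const γbar).rpow_const
              (fun x => Or.inr (half_pos hα).le)))
    have hmeas2 : Measurable
        (fun γ : ℝ => oneF1 mY mX (δ/C * (γ/γbar) ^ (α/2))) := by
      apply measurable_oneF1_comp hmY hmX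
      exact (continuous_const.mul ((continuous_id.div_const γbar).rpow_const
        (fun x => Or.inr (half_pos hα).le))).measurable
    have heq : (fun γ : ℝ => γ ^ k * aBXpdf mX mY ΩX ΩY α γbar C γ)
        = fun γ => (γ ^ k * (A * (γ/γbar) ^ e1 *
            Real.exp (-(1/C) * (γ/γbar) ^ (α/2)))) *
          oneF1 mY mX (δ/C * (γ/γbar) ^ (α/2)) := by
      funext γ
      simp only [aBXpdf, ← hθdef, ← hδdef, ← hAdef, ← he1def]
      ring
    rw [heq]
    exact (hcontOn.aestronglyMeasurable measurableSet_Ioi).mul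
      hmeas2.aestronglyMeasurable
  · -- bound
    rw [ae_restrict_iff' measurableSet_Ioi]
    refine Filter.Eventually.of_forall (fun γ hγ => ?_)
    have hγ0 : 0 < γ := hγ
    have hw : 0 < γ / γbar := div_pos hγ0 hγbar
    have hwe : γbar⁻¹ * γ = γ / γbar := by rw [div_eq_mul_inv, mul_comm]
    have hz : 0 < (γ/γbar) ^ (α/2) := Real.rpow_pos_of_pos hw _
    have harg : 0 ≤ δ/C * (γ/γbar) ^ (α/2) := by positivity
    have hF0 : 0 ≤ oneF1 mY mX (δ/C * (γ/γbar) ^ (α/2)) := oneF1_nonneg hmY hmX harg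
    have hFle := hbnd _ harg
    have hnnpre : 0 ≤ A * (γ/γbar) ^ e1 * Real.exp (-(1/C) * (γ/γbar) ^ (α/2)) := by
      have := Real.rpow_nonneg hw.le e1
      positivity
    simp only [aBXpdf, ← hθdef, ← hδdef, ← hAdef, ← he1def]
    rw [Real.norm_eq_abs, abs_of_nonneg (by
      exact mul_nonneg (Real.rpow_nonneg hγ0.le k) (mul_nonneg hnnpre hF0))]
    have hexp : Real.exp (-(1/C) * (γ/γbar) ^ (α/2)) *
        Real.exp (r * (δ/C * (γ/γbar) ^ (α/2)))
        = Real.exp (-c' * (γ/γbar) ^ (α/2)) := by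
      rw [← Real.exp_add]; congr 1; rw [hc'def]; field_simp; ring
    have hg : γ ^ k = γbar ^ k * (γ/γbar) ^ k := by
      rw [← Real.mul_rpow hγbar.le hw.le]
      congr 1
      field_simp
    calc γ ^ k * (A * (γ/γbar) ^ e1 * Real.exp (-(1/C) * (γ/γbar) ^ (α/2)) *
          oneF1 mY mX (δ/C * (γ/γbar) ^ (α/2)))
        ≤ γ ^ k * (A * (γ/γbar) ^ e1 * Real.exp (-(1/C) * (γ/γbar) ^ (α/2)) *
          (M * Real.exp (r * (δ/C * (γ/γbar) ^ (α/2))))) := by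
          apply mul_le_mul_of_nonneg_left
            (mul_le_mul_of_nonneg_left hFle hnnpre) (Real.rpow_nonneg hγ0.le k)
      _ = K * ((γbar⁻¹ * γ) ^ (k + e1) * Real.exp (-c' * (γbar⁻¹ * γ) ^ (α/2))) := by
          rw [hwe, Real.rpow_add hw, hKdef, ← hexp, hg]
          ring
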